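/- Gentle measurement lemma: Let {ρ_a}_{a∈A} be a family of density operators, {E_b}_{b∈B} a POVM (E_b ≥ 0, Σ_b E_b = I), φ: A → B a map, and λ > 0 such that 1 − Tr(ρ_a E_{φ(a)}) ≤ λ for all a ∈ A. Then for every a ∈ A, the trace-norm disturbance satisfies ‖ρ_a − Σ_{b∈B} √E_b ρ_a √E_b‖₁ ≤ √(8λ) + λ. -/

import Mathlib

open Matrix BigOperators Kronecker ComplexOrder

noncomputable def negMulLogb (x : ℝ) : ℝ := -(x * Real.logb 2 x)

/-- von Neumann entropy (base 2) of a matrix, via its eigenvalues. -/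
noncomputable def vN {n : Type*} [Fintype n] [DecidableEq n] (ρ : Matrix n n ℂ) : ℝ :=
  if h : ρ.IsHermitian then ∑ i, negMulLogb (h.eigenvalues i) else 0

/-- A density operator: positive semidefinite with unit trace. -/
def IsDensity {n : Type*} [Fintype n] [DecidableEq n] (ρ : Matrix n n ℂ) : Prop :=
  ρ.PosSemidef ∧ ρ.trace = 1

/-- Partial trace over the second tensor factor. -/
noncomputable def ptraceB {A B : Type*} [Fintype B] (ρ : Matrix (A × B) (A × B) ℂ) :
    Matrix A A ℂ :=
  Matrix.of fun a a' => ∑ b, ρ (a, b) (a', b)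

/-- Partial trace over the first tensor factor. -/
noncomputable def ptraceA {A B : Type*} [Fintype A] (ρ : Matrix (A × B) (A × B) ℂ) :
    Matrix B B ℂ :=
  Matrix.of fun b b' => ∑ a, ρ (a, b) (a, b')

/-- Positive square root of a positive semidefinite matrix (junk value 0 otherwise). -/
noncomputable def msqrt {n : Type*} [Fintype n] [DecidableEq n] (M : Matrix n n ℂ) :
    Matrix n n ℂ :=
  by classical exact if h : M.PosSemidef then
    ((h.1.eigenvectorUnitary : Matrix n n ℂ) *
      Matrix.diagonal ((↑) ∘ Real.sqrt ∘ h.1.eigenvalues) *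
      (star h.1.eigenvectorUnitary : Matrix n n ℂ))
    else 0

/-- Trace norm of a matrix. -/
noncomputable def traceNorm {n : Type*} [Fintype n] [DecidableEq n] (X : Matrix n n ℂ) : ℝ :=
  ((msqrt (Xᴴ * X)).trace).re

/-- Outer product |ξ⟩⟨ξ|. -/
noncomputable def outer {n : Type*} (ξ : n → ℂ) : Matrix n n ℂ :=
  Matrix.of fun i j => ξ i * (starRingEnd ℂ) (ξ j)

namespace GentleAux

variable {n : Type*} [Fintype n] [DecidableEq n]

open scoped MatrixOrder in
lemma msqrt_of_psd {M : Matrix n n ℂ} (h : M.PosSemidef) : msqrt M = CFC.sqrt M := by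
  rw [CFC.sqrt_eq_cfc, cfc_nnreal_eq_real _ M, h.1.cfc_eq]
  simp only [msqrt, dif_pos h, IsHermitian.cfc, Unitary.conjStarAlgAut_apply]
  congr 3
  funext i
  simp [Real.coe_sqrt, Real.coe_toNNReal', h.eigenvalues_nonneg i]

open scoped MatrixOrder in
lemma msqrt_posSemidef {M : Matrix n n ℂ} (h : M.PosSemidef) : (msqrt M).PosSemidef := by
  rw [msqrt_of_psd h]; exact Matrix.nonneg_iff_posSemidef.mp (CFC.sqrt_nonneg M)

open scoped MatrixOrder in
lemma msqrt_mul_self {M : Matrix n n ℂ} (h : M.PosSemidef) : msqrt M * msqrt M = M := by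
  rw [msqrt_of_psd h]; exact CFC.sqrt_mul_sqrt_self M (Matrix.nonneg_iff_posSemidef.mpr h)

lemma msqrt_eq {M N : Matrix n n ℂ} (hM : M.PosSemidef) (hN : N.PosSemidef)
    (hNN : N * N = M) : msqrt M = N := by
  open scoped MatrixOrder in
  rw [msqrt_of_psd hM]
  exact CFC.sqrt_unique hNN (Matrix.nonneg_iff_posSemidef.mpr hN)

lemma psd_diag_re_nonneg {M : Matrix n n ℂ} (hM : M.PosSemidef) (i : n) : 0 ≤ (M i i).re := by
  have h := hM.re_dotProduct_nonneg (Pi.single i 1)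
  simpa [dotProduct, mulVec, Pi.single_apply, Finset.sum_ite_eq] using h

lemma psd_trace_re_nonneg {M : Matrix n n ℂ} (hM : M.PosSemidef) : 0 ≤ M.trace.re := by
  have : M.trace.re = ∑ i, (M i i).re := by
    simp [Matrix.trace, Matrix.diag, Complex.re_sum]
  rw [this]
  exact Finset.sum_nonneg fun i _ => psd_diag_re_nonneg hM i

lemma trace_mul_psd_nonneg {A B₀ : Matrix n n ℂ} (hA : A.PosSemidef) (hB : B₀.PosSemidef) :
    0 ≤ ((A * B₀).trace).re := by
  have hS := msqrt_posSemidef hB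
  have h3 : (msqrt B₀ * A * msqrt B₀).PosSemidef := by
    have := hA.mul_mul_conjTranspose_same (msqrt B₀)
    rwa [hS.isHermitian.eq] at this
  have htr : (msqrt B₀ * A * msqrt B₀).trace = (A * B₀).trace := by
    rw [Matrix.mul_assoc, Matrix.trace_mul_comm, Matrix.mul_assoc, msqrt_mul_self hB]
  calc (0:ℝ) ≤ ((msqrt B₀ * A * msqrt B₀).trace).re := psd_trace_re_nonneg h3
    _ = ((A * B₀).trace).re := by rw [htr]

lemma psd_sum {ι : Type*} (s : Finset ι) (f : ι → Matrix n n ℂ)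
    (h : ∀ i ∈ s, (f i).PosSemidef) : (∑ i ∈ s, f i).PosSemidef :=
  Finset.sum_induction f _ (fun _ _ ha hb => ha.add hb) Matrix.PosSemidef.zero h

lemma herm_sum {ι : Type*} (s : Finset ι) (f : ι → Matrix n n ℂ)
    (h : ∀ i ∈ s, (f i).IsHermitian) : (∑ i ∈ s, f i).IsHermitian := by
  show (∑ i ∈ s, f i)ᴴ = ∑ i ∈ s, f i
  rw [Matrix.conjTranspose_sum]
  exact Finset.sum_congr rfl h

lemma conj_mul_conj {U A B : Matrix n n ℂ} (hU : star U * U = 1) :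
    (U * A * star U) * (U * B * star U) = U * (A * B) * star U := by
  have h : (U * A * star U) * (U * B * star U) = U * A * (star U * U) * (B * star U) := by
    noncomm_ring
  rw [h, hU]
  noncomm_ring

lemma trace_conj {U A : Matrix n n ℂ} (hU : star U * U = 1) :
    (U * A * star U).trace = A.trace := by
  rw [Matrix.trace_mul_cycle, hU, Matrix.one_mul]

lemma diag_real_hermitian (d : n → ℝ) :
    (Matrix.diagonal (fun i => (d i : ℂ))).IsHermitian := by
  show (Matrix.diagonal fun i => (d i : ℂ))ᴴ = _
  rw [Matrix.diagonal_conjTranspose]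
  have h : (star fun i => (d i : ℂ)) = fun i => (d i : ℂ) :=
    funext fun i => Complex.conj_ofReal (d i)
  rw [h]

lemma conjU_hermitian {U : Matrix n n ℂ} (d : n → ℝ) :
    (U * Matrix.diagonal (fun i => (d i : ℂ)) * star U).IsHermitian := by
  rw [Matrix.star_eq_conjTranspose]
  have h := Matrix.isHermitian_conjTranspose_mul_mul Uᴴ (diag_real_hermitian d)
  simpa only [Matrix.conjTranspose_conjTranspose] using h

lemma conjU_psd {U : Matrix n n ℂ} (d : n → ℝ) (hd : ∀ i, 0 ≤ d i) :
    (U * Matrix.diagonal (fun i => (d i : ℂ)) * star U).PosSemidef := by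
  rw [Matrix.star_eq_conjTranspose]
  refine Matrix.PosSemidef.mul_mul_conjTranspose_same ?_ U
  refine Matrix.PosSemidef.diagonal fun i => ?_
  simpa using Complex.zero_le_real.mpr (hd i)


section Spectral

lemma traceNorm_hermitian {H : Matrix n n ℂ} (hH : H.IsHermitian) :
    traceNorm H = ∑ i, |hH.eigenvalues i| := by
  set U : Matrix n n ℂ := (hH.eigenvectorUnitary : Matrix n n ℂ) with hU
  have hUs : star U * U = 1 := Matrix.mem_unitaryGroup_iff'.mp hH.eigenvectorUnitary.2
  have hUU : U * star U = 1 := Matrix.mem_unitaryGroup_iff.mp hH.eigenvectorUnitary.2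
  have hspec : H = U * Matrix.diagonal (fun i => (hH.eigenvalues i : ℂ)) * star U :=
    hH.spectral_theorem
  set N : Matrix n n ℂ := U * Matrix.diagonal (fun i => ((|hH.eigenvalues i| : ℝ) : ℂ)) * star U
    with hN
  have hNpsd : N.PosSemidef := conjU_psd _ (fun i => abs_nonneg _)
  have hNN : N * N = Hᴴ * H := by
    rw [hH.eq]
    conv_rhs => rw [hspec]
    rw [hN, conj_mul_conj hUs, conj_mul_conj hUs, Matrix.diagonal_mul_diagonal,
        Matrix.diagonal_mul_diagonal]
    rw [show (fun i => ((|hH.eigenvalues i| : ℝ) : ℂ) * ((|hH.eigenvalues i| : ℝ) : ℂ))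
        = fun i => ((hH.eigenvalues i : ℝ) : ℂ) * ((hH.eigenvalues i : ℝ) : ℂ) from
      funext fun i => by rw [← Complex.ofReal_mul, ← Complex.ofReal_mul, abs_mul_abs_self]]
  have hmsqrt : msqrt (Hᴴ * H) = N :=
    msqrt_eq (Matrix.posSemidef_conjTranspose_mul_self H) hNpsd hNN
  rw [traceNorm, hmsqrt, hN, trace_conj hUs, Matrix.trace_diagonal, Complex.re_sum]
  simp

lemma dual_le {H C : Matrix n n ℂ} (hH : H.IsHermitian) (hC : C.IsHermitian)
    (hC2 : ((1 : Matrix n n ℂ) - C * C).PosSemidef) :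
    ((C * H).trace).re ≤ traceNorm H := by
  set U : Matrix n n ℂ := (hH.eigenvectorUnitary : Matrix n n ℂ) with hU
  have hUs : star U * U = 1 := Matrix.mem_unitaryGroup_iff'.mp hH.eigenvectorUnitary.2
  have hUU : U * star U = 1 := Matrix.mem_unitaryGroup_iff.mp hH.eigenvectorUnitary.2
  set ev := hH.eigenvalues with hev
  have hspec : H = U * Matrix.diagonal (fun i => (ev i : ℂ)) * star U := hH.spectral_theorem
  set C' : Matrix n n ℂ := star U * C * U with hC'def
  have hC'h : C'.IsHermitian := by
    have h := Matrix.isHermitian_conjTranspose_mul_mul U hC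
    rwa [← Matrix.star_eq_conjTranspose] at h
  have htr : (C * H).trace = (C' * Matrix.diagonal (fun i => (ev i : ℂ))).trace := by
    conv_lhs => rw [hspec]
    rw [show C * (U * Matrix.diagonal (fun i => (ev i : ℂ)) * star U)
        = (C * U * Matrix.diagonal (fun i => (ev i : ℂ))) * star U by noncomm_ring]
    rw [Matrix.trace_mul_comm]
    rw [show star U * (C * U * Matrix.diagonal (fun i => (ev i : ℂ)))
        = (star U * C * U) * Matrix.diagonal (fun i => (ev i : ℂ)) by noncomm_ring]
  have hCC' : C' * C' = star U * (C * C) * U := by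
    rw [hC'def, show star U * C * U * (star U * C * U)
        = star U * C * (U * star U) * (C * U) by noncomm_ring, hUU]
    noncomm_ring
  have honesub : (1 : Matrix n n ℂ) - C' * C' = star U * ((1 : Matrix n n ℂ) - C * C) * U := by
    rw [hCC', Matrix.mul_sub, Matrix.mul_one, Matrix.sub_mul, hUs]
  have hpsd' : ((1 : Matrix n n ℂ) - C' * C').PosSemidef := by
    rw [honesub, Matrix.star_eq_conjTranspose]
    exact hC2.conjTranspose_mul_mul_same U
  have hdiag : ∀ i, |(C' i i).re| ≤ 1 := by
    intro i
    have h1 : 0 ≤ (((1 : Matrix n n ℂ) - C' * C') i i).re := psd_diag_re_nonneg hpsd' i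
    have h2 : ((C' * C') i i).re ≤ 1 := by
      have he : (((1 : Matrix n n ℂ) - C' * C') i i) = 1 - (C' * C') i i := by
        simp [Matrix.sub_apply, Matrix.one_apply_eq]
      rw [he] at h1
      simp only [Complex.sub_re, Complex.one_re] at h1
      linarith
    have h3 : ((C' * C') i i).re = ∑ j, Complex.normSq (C' i j) := by
      rw [Matrix.mul_apply, Complex.re_sum]
      refine Finset.sum_congr rfl fun j _ => ?_
      have hji : C' j i = star (C' i j) := by
        conv_lhs => rw [← hC'h.eq]
        exact Matrix.conjTranspose_apply C' i j
      rw [hji, Complex.star_def, Complex.mul_conj]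
      exact Complex.ofReal_re _
    have h4 : Complex.normSq (C' i i) ≤ ∑ j, Complex.normSq (C' i j) :=
      Finset.single_le_sum (fun j _ => Complex.normSq_nonneg _) (Finset.mem_univ i)
    have h5 : (C' i i).re ^ 2 ≤ Complex.normSq (C' i i) := by
      rw [Complex.normSq_apply]; nlinarith [sq_nonneg (C' i i).im]
    have h6 : (C' i i).re ^ 2 ≤ 1 := by rw [h3] at h2; linarith
    exact (sq_le_one_iff_abs_le_one _).mp h6
  rw [traceNorm_hermitian hH]
  have hre : ((C * H).trace).re = ∑ i, (C' i i).re * ev i := by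
    rw [htr]
    simp [Matrix.trace, Matrix.diag, Matrix.mul_diagonal, Complex.re_sum, Complex.mul_re]
  rw [hre]
  refine Finset.sum_le_sum fun i _ => ?_
  calc (C' i i).re * ev i ≤ |(C' i i).re * ev i| := le_abs_self _
    _ = |(C' i i).re| * |ev i| := abs_mul _ _
    _ ≤ 1 * |ev i| := mul_le_mul_of_nonneg_right (hdiag i) (abs_nonneg _)
    _ = |ev i| := one_mul _

lemma exists_dual {H : Matrix n n ℂ} (hH : H.IsHermitian) :
    ∃ C₀ : Matrix n n ℂ, C₀.IsHermitian ∧ C₀ * C₀ = 1 ∧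
      ((C₀ * H).trace).re = traceNorm H := by
  set U : Matrix n n ℂ := (hH.eigenvectorUnitary : Matrix n n ℂ) with hU
  have hUs : star U * U = 1 := Matrix.mem_unitaryGroup_iff'.mp hH.eigenvectorUnitary.2
  have hUU : U * star U = 1 := Matrix.mem_unitaryGroup_iff.mp hH.eigenvectorUnitary.2
  set ev := hH.eigenvalues with hev
  have hspec : H = U * Matrix.diagonal (fun i => (ev i : ℂ)) * star U := hH.spectral_theorem
  set s : n → ℝ := fun i => if 0 ≤ ev i then 1 else -1 with hs
  refine ⟨U * Matrix.diagonal (fun i => (s i : ℂ)) * star U, conjU_hermitian s, ?_, ?_⟩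
  · rw [conj_mul_conj hUs, Matrix.diagonal_mul_diagonal]
    have h1 : (fun i => (s i : ℂ) * (s i : ℂ)) = fun _ => (1 : ℂ) := by
      funext i; by_cases h : 0 ≤ ev i <;> simp [hs, h]
    rw [h1, Matrix.diagonal_one, Matrix.mul_one, hUU]
  · conv_lhs => rw [hspec]
    rw [conj_mul_conj hUs, Matrix.diagonal_mul_diagonal, trace_conj hUs,
      Matrix.trace_diagonal, traceNorm_hermitian hH, Complex.re_sum]
    refine Finset.sum_congr rfl fun i _ => ?_
    by_cases h : 0 ≤ ev i
    · simp [hs, h, abs_of_nonneg h, ← Complex.ofReal_mul]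
      exact (abs_of_nonneg h).symm
    · simp [hs, h, abs_of_neg (lt_of_not_ge h), ← Complex.ofReal_mul]
      exact (abs_of_neg (lt_of_not_ge h)).symm

lemma traceNorm_psd {M : Matrix n n ℂ} (h : M.PosSemidef) : traceNorm M = M.trace.re := by
  have hh : msqrt (Mᴴ * M) = M :=
    msqrt_eq (Matrix.posSemidef_conjTranspose_mul_self M) h (by rw [h.isHermitian.eq])
  rw [traceNorm, hh]

lemma traceNorm_neg (X : Matrix n n ℂ) : traceNorm (-X) = traceNorm X := by
  rw [traceNorm, traceNorm, Matrix.conjTranspose_neg, neg_mul_neg]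

lemma traceNorm_sum_le {ι : Type*} (t : Finset ι) (H : ι → Matrix n n ℂ)
    (h : ∀ i ∈ t, (H i).IsHermitian) :
    traceNorm (∑ i ∈ t, H i) ≤ ∑ i ∈ t, traceNorm (H i) := by
  obtain ⟨C, hC, hCC, heq⟩ := exists_dual (herm_sum t H h)
  rw [← heq, Finset.mul_sum, Matrix.trace_sum, Complex.re_sum]
  exact Finset.sum_le_sum fun i hi =>
    dual_le (h i hi) hC (by rw [hCC, sub_self]; exact Matrix.PosSemidef.zero)

lemma traceNorm_add_le {G H : Matrix n n ℂ} (hG : G.IsHermitian) (hH : H.IsHermitian) :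
    traceNorm (G + H) ≤ traceNorm G + traceNorm H := by
  obtain ⟨C, hC, hCC, heq⟩ := exists_dual (hG.add hH)
  rw [← heq, Matrix.mul_add, Matrix.trace_add, Complex.add_re]
  have hz : ((1 : Matrix n n ℂ) - C * C).PosSemidef := by
    rw [hCC, sub_self]; exact Matrix.PosSemidef.zero
  exact add_le_add (dual_le hG hC hz) (dual_le hH hC hz)

end Spectral

section CS

lemma real_CS (f g : n × n → ℝ) (hf : ∀ p, 0 ≤ f p) (hg : ∀ p, 0 ≤ g p) :
    ∑ p, f p * g p ≤ Real.sqrt (∑ p, f p ^ 2) * Real.sqrt (∑ p, g p ^ 2) := by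
  have h := Finset.sum_mul_sq_le_sq_mul_sq Finset.univ f g
  have h0 : 0 ≤ ∑ p, f p * g p := Finset.sum_nonneg fun p _ => mul_nonneg (hf p) (hg p)
  have h2 := Real.sqrt_le_sqrt h
  rwa [Real.sqrt_sq h0,
    Real.sqrt_mul (Finset.sum_nonneg fun p _ => sq_nonneg _)] at h2

lemma trace_entry_sum (A B : Matrix n n ℂ) :
    (Aᴴ * B).trace = ∑ p : n × n, (starRingEnd ℂ) (A p.2 p.1) * B p.2 p.1 := by
  rw [Fintype.sum_prod_type]
  simp [Matrix.trace, Matrix.diag, Matrix.mul_apply, Matrix.conjTranspose_apply,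
    Complex.star_def]

lemma trace_CS (A B : Matrix n n ℂ) :
    ((Aᴴ * B).trace).re ≤ Real.sqrt (((Aᴴ * A).trace).re) * Real.sqrt (((Bᴴ * B).trace).re) := by
  have hre : ((Aᴴ * B).trace).re ≤ ‖(Aᴴ * B).trace‖ := Complex.re_le_norm _
  have h1 : ‖(Aᴴ * B).trace‖
      ≤ ∑ p : n × n, ‖A p.2 p.1‖ * ‖B p.2 p.1‖ := by
    rw [trace_entry_sum]
    refine le_trans (norm_sum_le _ _) (le_of_eq ?_)
    refine Finset.sum_congr rfl fun p _ => ?_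
    rw [norm_mul, Complex.norm_conj]
  have keyA : ∀ M : Matrix n n ℂ, ((Mᴴ * M).trace).re = ∑ p : n × n, ‖M p.2 p.1‖ ^ 2 := by
    intro M
    rw [trace_entry_sum, Complex.re_sum]
    refine Finset.sum_congr rfl fun p _ => ?_
    have hm : (starRingEnd ℂ) (M p.2 p.1) * M p.2 p.1 = (Complex.normSq (M p.2 p.1) : ℂ) := by
      rw [mul_comm, Complex.mul_conj]
    rw [hm, Complex.ofReal_re, ← Complex.sq_norm]
  rw [keyA A, keyA B]
  exact le_trans hre (le_trans h1 (real_CS _ _ (fun p => norm_nonneg _)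
    (fun p => norm_nonneg _)))

end CS

section SqrtSub

lemma msqrt_sub_psd {M : Matrix n n ℂ} (hM : M.PosSemidef)
    (h1 : ((1 : Matrix n n ℂ) - M).PosSemidef) : (msqrt M - M).PosSemidef := by
  have hH := hM.isHermitian
  set U : Matrix n n ℂ := (hH.eigenvectorUnitary : Matrix n n ℂ) with hU
  have hUs : star U * U = 1 := Matrix.mem_unitaryGroup_iff'.mp hH.eigenvectorUnitary.2
  have hUU : U * star U = 1 := Matrix.mem_unitaryGroup_iff.mp hH.eigenvectorUnitary.2
  set ev := hH.eigenvalues with hev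
  have hev0 : ∀ i, 0 ≤ ev i := fun i => hM.eigenvalues_nonneg i
  have hspec : M = U * Matrix.diagonal (fun i => (ev i : ℂ)) * star U := hH.spectral_theorem
  have hdiagM : star U * M * U = Matrix.diagonal (fun i => (ev i : ℂ)) := by
    conv_lhs => rw [hspec]
    rw [show star U * (U * Matrix.diagonal (fun i => (ev i : ℂ)) * star U) * U
        = (star U * U) * Matrix.diagonal (fun i => (ev i : ℂ)) * (star U * U) by noncomm_ring,
      hUs, Matrix.one_mul, Matrix.mul_one]
  have hconj : star U * ((1 : Matrix n n ℂ) - M) * U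
      = Matrix.diagonal (fun i => ((1 - ev i : ℝ) : ℂ)) := by
    have key : star U * ((1 : Matrix n n ℂ) - M) * U = 1 - star U * M * U := by
      rw [Matrix.mul_sub, Matrix.mul_one, Matrix.sub_mul, hUs]
    rw [key, hdiagM, ← Matrix.diagonal_one, Matrix.diagonal_sub]
    rw [show (fun i => (1:ℂ) - ((ev i : ℝ) : ℂ)) = fun i => ((1 - ev i : ℝ) : ℂ) from
      funext fun i => by push_cast; ring]
  have hev1 : ∀ i, ev i ≤ 1 := by
    intro i
    have hpsd := h1.conjTranspose_mul_mul_same U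
    rw [← Matrix.star_eq_conjTranspose] at hpsd
    rw [hconj] at hpsd
    have h2 := Matrix.posSemidef_diagonal_iff.mp hpsd i
    have h3 : (0:ℝ) ≤ 1 - ev i := Complex.zero_le_real.mp h2
    linarith
  have hsq : msqrt M = U * Matrix.diagonal (fun i => ((Real.sqrt (ev i) : ℝ) : ℂ)) * star U := by
    refine msqrt_eq hM (conjU_psd _ fun i => Real.sqrt_nonneg _) ?_
    rw [conj_mul_conj hUs, Matrix.diagonal_mul_diagonal]
    conv_rhs => rw [hspec]
    rw [show (fun i => ((Real.sqrt (ev i) : ℝ) : ℂ) * ((Real.sqrt (ev i) : ℝ) : ℂ))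
        = fun i => ((ev i : ℝ) : ℂ) from
      funext fun i => by rw [← Complex.ofReal_mul, Real.mul_self_sqrt (hev0 i)]]
  have hdiff : msqrt M - M
      = U * Matrix.diagonal (fun i => ((Real.sqrt (ev i) - ev i : ℝ) : ℂ)) * star U := by
    rw [hsq]
    conv_lhs => rw [hspec]
    rw [show U * Matrix.diagonal (fun i => ((Real.sqrt (ev i) : ℝ) : ℂ)) * star U
          - U * Matrix.diagonal (fun i => (ev i : ℂ)) * star U
        = U * (Matrix.diagonal (fun i => ((Real.sqrt (ev i) : ℝ) : ℂ))
          - Matrix.diagonal (fun i => (ev i : ℂ))) * star U by noncomm_ring,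
      Matrix.diagonal_sub]
    rw [show (fun i => ((Real.sqrt (ev i) : ℝ) : ℂ) - ((ev i : ℝ) : ℂ))
        = fun i => ((Real.sqrt (ev i) - ev i : ℝ) : ℂ) from
      funext fun i => by push_cast; ring]
  rw [hdiff]
  refine conjU_psd _ fun i => ?_
  have h := hev0 i
  have h' := hev1 i
  have h2 : ev i * ev i ≤ ev i := by nlinarith
  have hh : ev i ≤ Real.sqrt (ev i) := by
    calc ev i = Real.sqrt (ev i * ev i) := (Real.sqrt_mul_self h).symm
      _ ≤ Real.sqrt (ev i) := Real.sqrt_le_sqrt h2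
  linarith

end SqrtSub

end GentleAux

open GentleAux

/-- Gentle measurement lemma. -/
theorem gentle_measurement {n A B : Type*} [Fintype n] [DecidableEq n] [Fintype B]
    (ρ : A → Matrix n n ℂ) (E : B → Matrix n n ℂ) (φ : A → B) (lam : ℝ)
    (hρ : ∀ a, IsDensity (ρ a))
    (hE : ∀ b, (E b).PosSemidef) (hEsum : ∑ b, E b = 1)
    (hlam : 0 < lam)
    (hgood : ∀ a, 1 - ((ρ a * E (φ a)).trace).re ≤ lam) :
    ∀ a, traceNorm (ρ a - ∑ b, msqrt (E b) * ρ a * msqrt (E b)) ≤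
      Real.sqrt (8 * lam) + lam := by
  intro a
  classical
  obtain ⟨hPpsd, hPtr⟩ := hρ a
  have hφmem : φ a ∈ (Finset.univ : Finset B) := Finset.mem_univ _
  have hRpsd : (msqrt (ρ a)).PosSemidef := msqrt_posSemidef hPpsd
  have hRR : msqrt (ρ a) * msqrt (ρ a) = ρ a := msqrt_mul_self hPpsd
  have hSφpsd : (msqrt (E (φ a))).PosSemidef := msqrt_posSemidef (hE (φ a))
  -- 1 - E (φ a) is PSD
  have hsplit : (1 : Matrix n n ℂ) - E (φ a) = ∑ b ∈ Finset.univ.erase (φ a), E b := by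
    rw [← hEsum, ← Finset.add_sum_erase _ E hφmem]
    abel
  have hOneF : ((1 : Matrix n n ℂ) - E (φ a)).PosSemidef := by
    rw [hsplit]; exact psd_sum _ _ fun b _ => hE b
  have hPF : ((ρ a * ((1 : Matrix n n ℂ) - E (φ a))).trace).re
      = 1 - ((ρ a * E (φ a)).trace).re := by
    rw [Matrix.mul_sub, Matrix.mul_one, Matrix.trace_sub, Complex.sub_re, hPtr]
    simp
  have hε0 : 0 ≤ 1 - ((ρ a * E (φ a)).trace).re := by
    rw [← hPF]; exact trace_mul_psd_nonneg hPpsd hOneF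
  have hεlam : 1 - ((ρ a * E (φ a)).trace).re ≤ lam := hgood a
  -- D
  set Dm : Matrix n n ℂ := 1 - msqrt (E (φ a)) with hDm
  have hDh : Dm.IsHermitian := Matrix.isHermitian_one.sub hSφpsd.isHermitian
  have hDD : Dm * Dm = 1 - msqrt (E (φ a)) - msqrt (E (φ a)) + E (φ a) := by
    have h := msqrt_mul_self (hE (φ a))
    calc Dm * Dm
        = 1 - msqrt (E (φ a)) - msqrt (E (φ a)) + msqrt (E (φ a)) * msqrt (E (φ a)) := by
          rw [hDm]; noncomm_ring
      _ = 1 - msqrt (E (φ a)) - msqrt (E (φ a)) + E (φ a) := by rw [h]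
  have hDmDm_psd : (Dm * Dm).PosSemidef := by
    have h := Matrix.posSemidef_conjTranspose_mul_self Dm
    rwa [hDh.eq] at h
  -- Hermitian / PSD facts
  have hDP_h : (Dm * ρ a + ρ a * Dm).IsHermitian := by
    show (Dm * ρ a + ρ a * Dm)ᴴ = _
    rw [Matrix.conjTranspose_add, Matrix.conjTranspose_mul, Matrix.conjTranspose_mul,
      hDh.eq, hPpsd.isHermitian.eq]
    exact add_comm _ _
  have hDPD_psd : (Dm * ρ a * Dm).PosSemidef := by
    have h := hPpsd.mul_mul_conjTranspose_same Dm
    rwa [hDh.eq] at h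
  have hSbPSb_psd : ∀ b, (msqrt (E b) * ρ a * msqrt (E b)).PosSemidef := by
    intro b
    have h := hPpsd.mul_mul_conjTranspose_same (msqrt (E b))
    rwa [(msqrt_posSemidef (hE b)).isHermitian.eq] at h
  -- the quantity t
  have ht0 : 0 ≤ ((ρ a * (Dm * Dm)).trace).re := trace_mul_psd_nonneg hPpsd hDmDm_psd
  have htB : ((ρ a * (Dm * Dm)).trace).re ≤ 1 - ((ρ a * E (φ a)).trace).re := by
    have hdiffpsd : ((1 : Matrix n n ℂ) - E (φ a) - Dm * Dm).PosSemidef := by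
      rw [hDD]
      have h2 : (1 : Matrix n n ℂ) - E (φ a)
          - (1 - msqrt (E (φ a)) - msqrt (E (φ a)) + E (φ a))
          = (msqrt (E (φ a)) - E (φ a)) + (msqrt (E (φ a)) - E (φ a)) := by abel
      rw [h2]
      have h3 : (msqrt (E (φ a)) - E (φ a)).PosSemidef := msqrt_sub_psd (hE (φ a)) hOneF
      exact h3.add h3
    have h4 : ρ a * ((1 : Matrix n n ℂ) - E (φ a) - Dm * Dm)
        = ρ a * ((1 : Matrix n n ℂ) - E (φ a)) - ρ a * (Dm * Dm) := by rw [Matrix.mul_sub]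
    have h5 := trace_mul_psd_nonneg hPpsd hdiffpsd
    rw [h4, Matrix.trace_sub, Complex.sub_re, hPF] at h5
    linarith
  -- Step 1 : trace norm of Dm ρ Dm
  have hstep1 : traceNorm (Dm * ρ a * Dm) = ((ρ a * (Dm * Dm)).trace).re := by
    rw [traceNorm_psd hDPD_psd]
    congr 1
    rw [Matrix.mul_assoc, Matrix.trace_mul_comm, Matrix.mul_assoc]
  -- Step 2 : trace norm of the cross term
  have hstep2 : traceNorm (Dm * ρ a + ρ a * Dm)
      ≤ 2 * Real.sqrt (((ρ a * (Dm * Dm)).trace).re) := by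
    obtain ⟨C, hC, hCC, heq⟩ := exists_dual hDP_h
    rw [← heq, Matrix.mul_add, Matrix.trace_add, Complex.add_re]
    have hCR : (((C * msqrt (ρ a))ᴴ * (C * msqrt (ρ a))).trace).re = 1 := by
      rw [Matrix.conjTranspose_mul, hC.eq, hRpsd.isHermitian.eq,
        show msqrt (ρ a) * C * (C * msqrt (ρ a))
          = msqrt (ρ a) * (C * C) * msqrt (ρ a) by noncomm_ring,
        hCC, Matrix.mul_one, hRR, hPtr]
      exact Complex.one_re
    have hDR : (((Dm * msqrt (ρ a))ᴴ * (Dm * msqrt (ρ a))).trace).re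
        = ((ρ a * (Dm * Dm)).trace).re := by
      rw [Matrix.conjTranspose_mul, hDh.eq, hRpsd.isHermitian.eq]
      congr 1
      rw [show msqrt (ρ a) * Dm * (Dm * msqrt (ρ a))
          = msqrt (ρ a) * (Dm * Dm) * msqrt (ρ a) by noncomm_ring,
        Matrix.trace_mul_comm, ← Matrix.mul_assoc, hRR]
    have hid1 : (((C * msqrt (ρ a))ᴴ) * (Dm * msqrt (ρ a))).trace
        = (C * (Dm * ρ a)).trace := by
      calc (((C * msqrt (ρ a))ᴴ) * (Dm * msqrt (ρ a))).trace
          = ((msqrt (ρ a) * C) * (Dm * msqrt (ρ a))).trace := by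
            rw [Matrix.conjTranspose_mul, hC.eq, hRpsd.isHermitian.eq]
        _ = ((Dm * msqrt (ρ a)) * (msqrt (ρ a) * C)).trace := Matrix.trace_mul_comm _ _
        _ = ((Dm * ρ a) * C).trace := by
            rw [show Dm * msqrt (ρ a) * (msqrt (ρ a) * C)
              = Dm * (msqrt (ρ a) * msqrt (ρ a)) * C by noncomm_ring, hRR]
        _ = (C * (Dm * ρ a)).trace := Matrix.trace_mul_comm _ _
    have hid2 : (((Dm * msqrt (ρ a))ᴴ) * (C * msqrt (ρ a))).trace
        = (C * (ρ a * Dm)).trace := by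
      calc (((Dm * msqrt (ρ a))ᴴ) * (C * msqrt (ρ a))).trace
          = ((msqrt (ρ a) * Dm) * (C * msqrt (ρ a))).trace := by
            rw [Matrix.conjTranspose_mul, hDh.eq, hRpsd.isHermitian.eq]
        _ = ((C * msqrt (ρ a)) * (msqrt (ρ a) * Dm)).trace := Matrix.trace_mul_comm _ _
        _ = (C * (ρ a * Dm)).trace := by
            rw [show C * msqrt (ρ a) * (msqrt (ρ a) * Dm)
              = C * ((msqrt (ρ a) * msqrt (ρ a)) * Dm) by noncomm_ring, hRR]
    have hterm1 : ((C * (Dm * ρ a)).trace).re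
        ≤ Real.sqrt (((ρ a * (Dm * Dm)).trace).re) := by
      have h := trace_CS (C * msqrt (ρ a)) (Dm * msqrt (ρ a))
      rw [hCR, hDR, hid1, Real.sqrt_one, one_mul] at h
      exact h
    have hterm2 : ((C * (ρ a * Dm)).trace).re
        ≤ Real.sqrt (((ρ a * (Dm * Dm)).trace).re) := by
      have h := trace_CS (Dm * msqrt (ρ a)) (C * msqrt (ρ a))
      rw [hCR, hDR, hid2, Real.sqrt_one, mul_one] at h
      exact h
    linarith
  -- Step 3 : the other POVM elements
  have hstep3 : ∀ b, traceNorm (msqrt (E b) * ρ a * msqrt (E b)) = ((ρ a * E b).trace).re := by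
    intro b
    rw [traceNorm_psd (hSbPSb_psd b)]
    congr 1
    rw [Matrix.mul_assoc, Matrix.trace_mul_comm, Matrix.mul_assoc, msqrt_mul_self (hE b)]
  have hsum3 : ∑ b ∈ Finset.univ.erase (φ a), ((ρ a * E b).trace).re
      = 1 - ((ρ a * E (φ a)).trace).re := by
    rw [← hPF, ← Complex.re_sum, ← Matrix.trace_sum, ← Finset.mul_sum, ← hsplit]
  -- Decomposition
  have hdecomp : ρ a - ∑ b, msqrt (E b) * ρ a * msqrt (E b)
      = (Dm * ρ a + ρ a * Dm) + (-(Dm * ρ a * Dm)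
        + -(∑ b ∈ Finset.univ.erase (φ a), msqrt (E b) * ρ a * msqrt (E b))) := by
    rw [← Finset.add_sum_erase _ (fun b => msqrt (E b) * ρ a * msqrt (E b)) hφmem, hDm]
    noncomm_ring
  -- Triangle inequality
  have hT_h : (∑ b ∈ Finset.univ.erase (φ a),
      msqrt (E b) * ρ a * msqrt (E b)).IsHermitian :=
    herm_sum _ _ fun b _ => (hSbPSb_psd b).isHermitian
  have htriangle : traceNorm (ρ a - ∑ b, msqrt (E b) * ρ a * msqrt (E b))
      ≤ 2 * Real.sqrt (((ρ a * (Dm * Dm)).trace).re) + ((ρ a * (Dm * Dm)).trace).re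
        + (1 - ((ρ a * E (φ a)).trace).re) := by
    rw [hdecomp]
    have h1 := traceNorm_add_le hDP_h (hDPD_psd.isHermitian.neg.add hT_h.neg)
    have h2 := traceNorm_add_le hDPD_psd.isHermitian.neg hT_h.neg
    rw [traceNorm_neg, traceNorm_neg] at h2
    have h3 : traceNorm (∑ b ∈ Finset.univ.erase (φ a), msqrt (E b) * ρ a * msqrt (E b))
        ≤ 1 - ((ρ a * E (φ a)).trace).re := by
      refine le_trans (traceNorm_sum_le _ _ fun b _ => (hSbPSb_psd b).isHermitian) ?_
      rw [Finset.sum_congr rfl fun b _ => hstep3 b]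
      rw [hsum3]
    have h4 := hstep2
    rw [hstep1] at h2
    linarith
  -- Final numeric estimates
  by_cases hc : lam ≤ 1/2
  · have hsq : Real.sqrt (((ρ a * (Dm * Dm)).trace).re) ≤ Real.sqrt lam :=
      Real.sqrt_le_sqrt (le_trans htB hεlam)
    have hbound : traceNorm (ρ a - ∑ b, msqrt (E b) * ρ a * msqrt (E b))
        ≤ 2 * Real.sqrt lam + 2 * lam := by
      have := le_trans htB hεlam
      linarith
    have h8 : Real.sqrt (8 * lam) = Real.sqrt 8 * Real.sqrt lam :=
      Real.sqrt_mul (by norm_num) lam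
    have hs8 : Real.sqrt 8 ^ 2 = 8 := Real.sq_sqrt (by norm_num)
    have hsl : Real.sqrt lam ^ 2 = lam := Real.sq_sqrt hlam.le
    have hl34 : Real.sqrt lam ≤ 3 / 4 := by
      nlinarith [Real.sqrt_nonneg lam]
    have h2l : 2 + Real.sqrt lam ≤ Real.sqrt 8 := by
      nlinarith [Real.sqrt_nonneg 8, Real.sqrt_nonneg lam]
    have hfinal : 2 * Real.sqrt lam + 2 * lam ≤ Real.sqrt (8 * lam) + lam := by
      rw [h8]
      nlinarith [mul_le_mul_of_nonneg_right h2l (Real.sqrt_nonneg lam)]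
    linarith
  · push_neg at hc
    have hFull : (∑ b, msqrt (E b) * ρ a * msqrt (E b)).PosSemidef :=
      psd_sum _ _ fun b _ => hSbPSb_psd b
    have htr2 : ((∑ b, msqrt (E b) * ρ a * msqrt (E b)).trace).re = 1 := by
      rw [Matrix.trace_sum, Complex.re_sum]
      rw [Finset.sum_congr rfl fun b _ => show ((msqrt (E b) * ρ a * msqrt (E b)).trace).re
          = ((ρ a * E b).trace).re from by
        congr 1
        rw [Matrix.mul_assoc, Matrix.trace_mul_comm, Matrix.mul_assoc, msqrt_mul_self (hE b)]]
      rw [← Complex.re_sum, ← Matrix.trace_sum, ← Finset.mul_sum, hEsum, Matrix.mul_one, hPtr]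
      simp
    have htriv : traceNorm (ρ a - ∑ b, msqrt (E b) * ρ a * msqrt (E b)) ≤ 2 := by
      rw [sub_eq_add_neg]
      refine le_trans (traceNorm_add_le hPpsd.isHermitian hFull.isHermitian.neg) ?_
      rw [traceNorm_neg, traceNorm_psd hPpsd, traceNorm_psd hFull, hPtr, htr2]
      norm_num
    have h2sqrt : (2:ℝ) ≤ Real.sqrt (8 * lam) := by
      have h4 : (4:ℝ) ≤ 8 * lam := by linarith
      calc (2:ℝ) = Real.sqrt 4 := by
            rw [show (4:ℝ) = 2 ^ 2 by norm_num, Real.sqrt_sq (by norm_num : (0:ℝ) ≤ 2)]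
        _ ≤ Real.sqrt (8 * lam) := Real.sqrt_le_sqrt h4
    linarith
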